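/- In the setting of the previous reduction lemma (standard bubble configuration (T,ρ) of type ε with 0 < 8ε ≤ 1, subset T' with retraction R as above, k = |T'|, and ρ'(x) = (1/(4ε))·max{ε^{-1}(4ε³)^k, ρ(x)}): for each z ∈ T one has |z − R(z)| ≤ 4ε²·ρ'(R(z)) and ρ(z) ≤ 4ε·ρ'(R(z)); moreover if z ≠ R(z) then ρ'(R(z)) = (1/(4ε²))·(4ε³)^k. Finally, for each x ∈ T' and any w ∈ B²(x, ρ'(x)), the minimum distance |w − T| = min_{u∈T}|w−u| is attained by a point of R^{-1}(x) = T ∩ B²(x, ρ'(x)). -/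

import Mathlib

set_option maxHeartbeats 1600000 in
/-- further properties of the reduction of a standard bubble
configuration `(T,ρ)` of type ε: for `z ∈ T`, `|z - R(z)| ≤ 4ε²·ρ'(R(z))` and
`ρ(z) ≤ 4ε·ρ'(R(z))`; if `z ≠ R(z)` then `ρ'(R(z)) = (1/(4ε²))·(4ε³)^k`; and
for `x ∈ T'`, `w ∈ B²(x,ρ'(x))` the minimum of `|w - ·|` over `T` is attained on
`R⁻¹(x)`, which equals `T ∩ B²(x,ρ'(x))`. -/
theorem bubble_reduce_properties (ε : ℝ) (hε0 : 0 < ε) (hε1 : 8 * ε ≤ 1)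
    (T : Finset ℂ) (ρ : ℂ → ℝ)
    (hT0 : (0 : ℂ) ∈ T)
    (hTle : ∀ z ∈ T, ‖z‖ ≤ ε)
    (hTsup : ∃ z ∈ T, ‖z‖ = ε)
    (hρ0 : ∀ z ∈ T, 0 ≤ ρ z)
    (hρ4 : ∀ z ∈ T, ρ z ≤ 4 * ε)
    (hsep : ∀ x ∈ T, ∀ y ∈ T, x ≠ y → ρ x + ρ y ≤ ε ^ 2 / 4 * ‖x - y‖)
    (T' : Finset ℂ) (hT'sub : T' ⊆ T) (hT'0 : (0 : ℂ) ∈ T')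
    (R : ℂ → ℂ) (hRmem : ∀ x ∈ T, R x ∈ T') (hRid : ∀ x ∈ T', R x = x)
    (hT'sep : ∀ x ∈ T', ∀ y ∈ T', x ≠ y →
      (4 * ε ^ 3) ^ (T'.card - 1) < ‖x - y‖)
    (hRclose : ∀ x ∈ T, ‖x - R x‖ ≤ (4 * ε ^ 3) ^ T'.card) :
    let k := T'.card
    let ρ' : ℂ → ℝ := fun x => (1 / (4 * ε)) * max (ε⁻¹ * (4 * ε ^ 3) ^ k) (ρ x)
    (∀ z ∈ T, ‖z - R z‖ ≤ 4 * ε ^ 2 * ρ' (R z) ∧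
      ρ z ≤ 4 * ε * ρ' (R z)) ∧
    (∀ z ∈ T, z ≠ R z → ρ' (R z) = (1 / (4 * ε ^ 2)) * (4 * ε ^ 3) ^ k) ∧
    (∀ x ∈ T', {u : ℂ | u ∈ T ∧ R u = x} =
      {u : ℂ | u ∈ T ∧ u ∈ Metric.closedBall x (ρ' x)}) ∧
    (∀ x ∈ T', ∀ w ∈ Metric.closedBall x (ρ' x),
      ∃ u ∈ T, R u = x ∧ ∀ u' ∈ T, ‖w - u‖ ≤ ‖w - u'‖) := by
  intro k ρ'
  have hε : ε ≤ 1/8 := by linarith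
  have hB0 : (0:ℝ) < 4 * ε ^ 3 := by positivity
  have hBsmall : 4 * ε ^ 3 ≤ 1/128 := by
    have h := pow_le_pow_left₀ hε0.le hε 3
    norm_num at h; linarith
  have hkpos : 0 < k := Finset.card_pos.mpr ⟨0, hT'0⟩
  have hBk : (4 * ε ^ 3) ^ k = (4 * ε ^ 3) ^ (k-1) * (4 * ε ^ 3) := by
    calc (4 * ε ^ 3) ^ k = (4 * ε ^ 3) ^ (k - 1 + 1) := by
          rw [Nat.sub_add_cancel hkpos]
      _ = (4 * ε ^ 3) ^ (k-1) * (4 * ε ^ 3) := pow_succ _ _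
  have hBknn : (0:ℝ) ≤ (4 * ε ^ 3) ^ k := by positivity
  have hA0 : (0:ℝ) ≤ ε⁻¹ * (4 * ε ^ 3) ^ k := by positivity
  have hρ'nn : ∀ x, 0 ≤ ρ' x := fun x =>
    mul_nonneg (by positivity) (le_trans hA0 (le_max_left _ _))
  -- key separation lemma
  have hfar : ∀ u ∈ T, ∀ x ∈ T', R u ≠ x → 2 * ρ' x < ‖u - x‖ := by
    intro u hu x hx hne
    have hyT' : R u ∈ T' := hRmem u hu
    have hyT : R u ∈ T := hT'sub hyT'
    have hxT : x ∈ T := hT'sub hx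
    have hD : (4 * ε ^ 3) ^ (k-1) < ‖R u - x‖ := hT'sep _ hyT' _ hx hne
    set D := ‖R u - x‖ with hDdef
    have hD0 : 0 < D := lt_of_le_of_lt (by positivity) hD
    have hsep' : ρ x + ρ (R u) ≤ ε^2/4 * D := by
      have h := hsep x hxT (R u) hyT (Ne.symm hne)
      rwa [norm_sub_rev] at h
    have hρx : ρ x ≤ ε^2/4 * D := by linarith [hρ0 (R u) hyT]
    have hBkD : (4 * ε ^ 3) ^ k ≤ (4 * ε ^ 3) * D := by
      rw [hBk]; nlinarith
    have huy : ‖u - R u‖ ≤ (4 * ε ^ 3) ^ k := hRclose u hu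
    have htri : D ≤ ‖u - x‖ + ‖u - R u‖ := by
      have h := norm_sub_le_norm_sub_add_norm_sub (R u) u x
      have h2 := norm_sub_rev (R u) u
      linarith
    have hmax : max (ε⁻¹ * (4 * ε ^ 3) ^ k) (ρ x) ≤ 8 * ε^2 * D := by
      apply max_le
      · have h1 : ε⁻¹ * (4 * ε ^ 3) ^ k ≤ ε⁻¹ * ((4 * ε ^ 3) * D) := by
          exact mul_le_mul_of_nonneg_left hBkD (by positivity)
        have h2 : ε⁻¹ * ((4 * ε ^ 3) * D) = 4 * ε^2 * D := by
          field_simp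
        nlinarith
      · nlinarith
    have h1 : ρ' x ≤ 2 * ε * D := by
      have h2 : (1/(4*ε)) * (8 * ε^2 * D) = 2 * ε * D := by field_simp; ring
      calc ρ' x ≤ (1/(4*ε)) * (8*ε^2*D) :=
            mul_le_mul_of_nonneg_left hmax (by positivity)
        _ = 2*ε*D := h2
    nlinarith [mul_le_mul_of_nonneg_right hBsmall (le_of_lt hD0)]
  refine ⟨?_, ?_, ?_, ?_⟩
  · intro z hz
    constructor
    · have h1 : ε⁻¹ * (4 * ε ^ 3) ^ k ≤ max (ε⁻¹ * (4 * ε ^ 3) ^ k) (ρ (R z)) :=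
        le_max_left _ _
      have h2 : 4 * ε^2 * ((1/(4*ε)) * (ε⁻¹ * (4 * ε ^ 3) ^ k)) = (4 * ε ^ 3) ^ k := by
        field_simp
      calc ‖z - R z‖ ≤ (4 * ε ^ 3) ^ k := hRclose z hz
        _ = 4 * ε^2 * ((1/(4*ε)) * (ε⁻¹ * (4 * ε ^ 3) ^ k)) := h2.symm
        _ ≤ 4 * ε ^ 2 * ρ' (R z) := by
            apply mul_le_mul_of_nonneg_left _ (by positivity)
            exact mul_le_mul_of_nonneg_left h1 (by positivity)
    · have h0 : 4 * ε * ρ' (R z) = max (ε⁻¹ * (4 * ε ^ 3) ^ k) (ρ (R z)) := by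
        show 4 * ε * ((1/(4*ε)) * _) = _
        field_simp
      rw [h0]
      by_cases hzz : z = R z
      · rw [← hzz]; exact le_max_right _ _
      · have hyT : R z ∈ T := hT'sub (hRmem z hz)
        have h := hsep z hz (R z) hyT hzz
        have h2 : ρ z ≤ ε^2/4 * (4 * ε ^ 3) ^ k := by
          have := hRclose z hz
          nlinarith [hρ0 (R z) hyT]
        have h3 : ε^2/4 * (4 * ε ^ 3) ^ k ≤ ε⁻¹ * (4 * ε ^ 3) ^ k := by
          apply mul_le_mul_of_nonneg_right _ hBknn
          rw [inv_eq_one_div, le_div_iff₀ hε0]; nlinarith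
        exact le_trans (le_trans h2 h3) (le_max_left _ _)
  · intro z hz hzz
    have hyT : R z ∈ T := hT'sub (hRmem z hz)
    have h := hsep z hz (R z) hyT hzz
    have h2 : ρ (R z) ≤ ε^2/4 * (4 * ε ^ 3) ^ k := by
      have := hRclose z hz
      nlinarith [hρ0 z hz]
    have h3 : ε^2/4 * (4 * ε ^ 3) ^ k ≤ ε⁻¹ * (4 * ε ^ 3) ^ k := by
      apply mul_le_mul_of_nonneg_right _ hBknn
      rw [inv_eq_one_div, le_div_iff₀ hε0]; nlinarith
    have hmax : max (ε⁻¹ * (4 * ε ^ 3) ^ k) (ρ (R z)) = ε⁻¹ * (4 * ε ^ 3) ^ k :=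
      max_eq_left (le_trans h2 h3)
    show (1/(4*ε)) * max (ε⁻¹ * (4 * ε ^ 3) ^ k) (ρ (R z)) = _
    rw [hmax]; field_simp
  · intro x hx
    ext u
    simp only [Set.mem_setOf_eq, Metric.mem_closedBall, Complex.dist_eq]
    constructor
    · rintro ⟨hu, hRu⟩
      refine ⟨hu, ?_⟩
      have h1 : ‖u - x‖ ≤ (4 * ε ^ 3) ^ k := hRu ▸ hRclose u hu
      have h2 : (4 * ε ^ 3) ^ k ≤ ρ' x := by
        have h3 : (4 * ε ^ 3) ^ k ≤ (1/(4*ε)) * (ε⁻¹ * (4 * ε ^ 3) ^ k) := by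
          rw [show (1/(4*ε)) * (ε⁻¹ * (4 * ε ^ 3) ^ k) = (4 * ε ^ 3) ^ k / (4 * ε^2) by
            field_simp]
          rw [le_div_iff₀ (by positivity)]
          nlinarith [mul_nonneg hBknn (show (0:ℝ) ≤ 1 - 4*ε^2 by nlinarith)]
        exact le_trans h3 (mul_le_mul_of_nonneg_left (le_max_left _ _) (by positivity))
      linarith
    · rintro ⟨hu, hball⟩
      refine ⟨hu, ?_⟩
      by_contra hne
      have := hfar u hu x hx hne
      linarith [hρ'nn x]
  · intro x hx w hw
    rw [Metric.mem_closedBall, Complex.dist_eq] at hw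
    obtain ⟨u, hu, hmin⟩ := T.exists_min_image (fun u => ‖w - u‖)
      ⟨x, hT'sub hx⟩
    refine ⟨u, hu, ?_, hmin⟩
    by_contra hne
    have h1 := hfar u hu x hx hne
    have h2 : ‖w - u‖ ≤ ‖w - x‖ := hmin x (hT'sub hx)
    have h3 : ‖u - x‖ ≤ ‖u - w‖ + ‖w - x‖ :=
      norm_sub_le_norm_sub_add_norm_sub u w x
    rw [norm_sub_rev u w] at h3
    linarith [hρ'nn x]
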